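/- Let u : [a,b] → ℝ be positive, integrable and convex on [a,b], and let α > 0. Then u((a+b)/2) ≤ (Γ(α+1)/(2(b-a)^α)) [I^α_{a+}u(b) + I^α_{b-}u(a)] ≤ (u(a)+u(b))/2, where I^α_{a+}u(b) = (1/Γ(α)) ∫_a^b (b-s)^{α-1} u(s) ds and I^α_{b-}u(a) = (1/Γ(α)) ∫_a^b (s-a)^{α-1} u(s) ds. -/

import Mathlib

open Real MeasureTheory

theorem fractional_hermite_hadamard_RL
    (a b : ℝ) (hab : a < b) (u : ℝ → ℝ) (α : ℝ) (hα : 0 < α)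
    (hupos : ∀ x ∈ Set.Icc a b, 0 < u x)
    (hconv : ∀ x ∈ Set.Icc a b, ∀ y ∈ Set.Icc a b, ∀ μ ∈ Set.Icc (0:ℝ) 1,
      u (μ * x + (1 - μ) * y) ≤ μ * u x + (1 - μ) * u y)
    (hu : IntervalIntegrable u volume a b) :
    u ((a + b) / 2) ≤
        (Real.Gamma (α + 1) / (2 * (b - a) ^ α)) *
          ((1 / Real.Gamma α) * (∫ s in a..b, (b - s) ^ (α - 1) * u s) +
            (1 / Real.Gamma α) * ∫ s in a..b, (s - a) ^ (α - 1) * u s) ∧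
      (Real.Gamma (α + 1) / (2 * (b - a) ^ α)) *
          ((1 / Real.Gamma α) * (∫ s in a..b, (b - s) ^ (α - 1) * u s) +
            (1 / Real.Gamma α) * ∫ s in a..b, (s - a) ^ (α - 1) * u s) ≤
        (u a + u b) / 2 := by
  have hab' : a ≤ b := hab.le
  have hba : (0:ℝ) < b - a := by linarith
  set m : ℝ := (a + b) / 2 with hm
  -- chord bound
  have hchord : ∀ x ∈ Set.Icc a b, u x + u (a + b - x) ≤ u a + u b := by
    intro x hx
    obtain ⟨hx1, hx2⟩ := hx
    set μ := (b - x) / (b - a) with hμdef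
    set ν := (x - a) / (b - a) with hνdef
    have hμν : μ + ν = 1 := by rw [hμdef, hνdef]; field_simp; ring
    have hμmem : μ ∈ Set.Icc (0:ℝ) 1 := by
      constructor
      · rw [hμdef]; apply div_nonneg <;> linarith
      · rw [hμdef, div_le_one hba]; linarith
    have hνmem : ν ∈ Set.Icc (0:ℝ) 1 := by
      constructor
      · rw [hνdef]; apply div_nonneg <;> linarith
      · rw [hνdef, div_le_one hba]; linarith
    have ha : a ∈ Set.Icc a b := ⟨le_refl a, hab'⟩
    have hb : b ∈ Set.Icc a b := ⟨hab', le_refl b⟩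
    have h1 := hconv a ha b hb μ hμmem
    have h2 := hconv a ha b hb ν hνmem
    have e1 : μ * a + (1 - μ) * b = x := by
      rw [hμdef]; field_simp; ring
    have e2 : ν * a + (1 - ν) * b = a + b - x := by
      rw [hνdef]; field_simp; ring
    rw [e1] at h1
    rw [e2] at h2
    have : ν = 1 - μ := by linarith
    rw [this] at h2
    linarith
  have hmid : ∀ x ∈ Set.Icc a b, 2 * u m ≤ u x + u (a + b - x) := by
    intro x hx
    have hx' : a + b - x ∈ Set.Icc a b := ⟨by linarith [hx.2], by linarith [hx.1]⟩
    have h := hconv x hx (a + b - x) hx' (1/2) ⟨by norm_num, by norm_num⟩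
    have e : (1/2 : ℝ) * x + (1 - 1/2) * (a + b - x) = m := by rw [hm]; ring
    rw [e] at h
    linarith
  -- bound of u
  set M : ℝ := max (u a) (u b) with hM
  have hbd : ∀ x ∈ Set.Icc a b, ‖u x‖ ≤ M := by
    intro x hx
    rw [Real.norm_eq_abs, abs_of_nonneg (hupos x hx).le]
    have := hchord x hx
    have hx' : a + b - x ∈ Set.Icc a b := ⟨by linarith [hx.2], by linarith [hx.1]⟩
    have h1 : u a ≤ M := le_max_left _ _
    have h2 : u b ≤ M := le_max_right _ _
    have h3 : 0 < u (a + b - x) := hupos _ hx'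
    -- need u x ≤ M directly; from u x + u (a+b-x) ≤ u a + u b ≤ 2M and u(a+b-x) > 0 :
    obtain ⟨hx1, hx2⟩ := hx
    set μ := (b - x) / (b - a) with hμdef
    have hμmem : μ ∈ Set.Icc (0:ℝ) 1 := by
      constructor
      · rw [hμdef]; apply div_nonneg <;> linarith
      · rw [hμdef, div_le_one hba]; linarith
    have ha : a ∈ Set.Icc a b := ⟨le_refl a, hab'⟩
    have hb : b ∈ Set.Icc a b := ⟨hab', le_refl b⟩
    have hcc := hconv a ha b hb μ hμmem
    have e1 : μ * a + (1 - μ) * b = x := by rw [hμdef]; field_simp; ring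
    rw [e1] at hcc
    have hμ0 : 0 ≤ μ := hμmem.1
    have hμ1 : μ ≤ 1 := hμmem.2
    nlinarith
  -- integrability of weights
  have hw1 : IntervalIntegrable (fun s => (b - s) ^ (α - 1)) volume a b := by
    have h : IntervalIntegrable (fun x : ℝ => x ^ (α - 1)) volume (b - a) 0 :=
      intervalIntegral.intervalIntegrable_rpow' (by linarith)
    simpa using h.comp_sub_left b
  have hw2 : IntervalIntegrable (fun s => (s - a) ^ (α - 1)) volume a b := by
    have h : IntervalIntegrable (fun x : ℝ => x ^ (α - 1)) volume 0 (b - a) :=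
      intervalIntegral.intervalIntegrable_rpow' (by linarith)
    simpa using h.comp_sub_right a
  -- measurability of u and reflected u
  have humeas : AEStronglyMeasurable u (volume.restrict (Set.Ioc a b)) :=
    ((intervalIntegrable_iff_integrableOn_Ioc_of_le hab').mp hu).aestronglyMeasurable
  have hu3 : IntervalIntegrable (fun x => u (a + b - x)) volume a b := by
    simpa using (hu.comp_sub_left (a + b)).symm
  have hu3meas : AEStronglyMeasurable (fun x => u (a + b - x))
      (volume.restrict (Set.Ioc a b)) :=
    ((intervalIntegrable_iff_integrableOn_Ioc_of_le hab').mp hu3).aestronglyMeasurable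
  -- integrability of products
  have haebd : ∀ᵐ x ∂(volume.restrict (Set.Ioc a b)), ‖u x‖ ≤ M := by
    rw [ae_restrict_iff' measurableSet_Ioc]
    exact Filter.Eventually.of_forall fun x hx => hbd x (Set.Ioc_subset_Icc_self hx)
  have haebd3 : ∀ᵐ x ∂(volume.restrict (Set.Ioc a b)), ‖u (a + b - x)‖ ≤ M := by
    rw [ae_restrict_iff' measurableSet_Ioc]
    refine Filter.Eventually.of_forall fun x hx => ?_
    have hx' := Set.Ioc_subset_Icc_self hx
    exact hbd _ ⟨by linarith [hx'.2], by linarith [hx'.1]⟩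
  have hI1 : IntervalIntegrable (fun s => (b - s) ^ (α - 1) * u s) volume a b := by
    rw [intervalIntegrable_iff_integrableOn_Ioc_of_le hab']
    have := (Integrable.bdd_mul ((intervalIntegrable_iff_integrableOn_Ioc_of_le hab').mp hw1)
      humeas haebd)
    exact this.congr (Filter.Eventually.of_forall fun x => mul_comm _ _)
  have hI2 : IntervalIntegrable (fun s => (s - a) ^ (α - 1) * u s) volume a b := by
    rw [intervalIntegrable_iff_integrableOn_Ioc_of_le hab']
    have := (Integrable.bdd_mul ((intervalIntegrable_iff_integrableOn_Ioc_of_le hab').mp hw2)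
      humeas haebd)
    exact this.congr (Filter.Eventually.of_forall fun x => mul_comm _ _)
  have hI3 : IntervalIntegrable (fun s => (b - s) ^ (α - 1) * u (a + b - s)) volume a b := by
    rw [intervalIntegrable_iff_integrableOn_Ioc_of_le hab']
    have := (Integrable.bdd_mul ((intervalIntegrable_iff_integrableOn_Ioc_of_le hab').mp hw1)
      hu3meas haebd3)
    exact this.congr (Filter.Eventually.of_forall fun x => mul_comm _ _)
  -- value of the weight integral
  have hc : (∫ s in a..b, (b - s) ^ (α - 1)) = (b - a) ^ α / α := by
    rw [intervalIntegral.integral_comp_sub_left (fun x : ℝ => x ^ (α - 1)) b]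
    rw [integral_rpow (Or.inl (by linarith : (-1:ℝ) < α - 1))]
    rw [sub_self, Real.zero_rpow (by linarith), sub_add_cancel, sub_zero]
  -- reflection
  have hrefl : (∫ s in a..b, (b - s) ^ (α - 1) * u (a + b - s))
      = ∫ s in a..b, (s - a) ^ (α - 1) * u s := by
    have h := intervalIntegral.integral_comp_sub_left (a := a) (b := b)
      (fun t => (t - a) ^ (α - 1) * u t) (a + b)
    simp only [add_sub_cancel_left, add_sub_cancel_right] at h
    rw [← h]
    apply intervalIntegral.integral_congr
    intro x hx
    ring_nf
  set I1 := ∫ s in a..b, (b - s) ^ (α - 1) * u s with hI1def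
  set I2 := ∫ s in a..b, (s - a) ^ (α - 1) * u s with hI2def
  have hwnn : ∀ x ∈ Set.Icc a b, (0:ℝ) ≤ (b - x) ^ (α - 1) := fun x hx =>
    Real.rpow_nonneg (by linarith [hx.2]) _
  -- lower inequality on integrals
  have hlow : (b - a) ^ α / α * (2 * u m) ≤ I1 + I2 := by
    have hmono : (∫ s in a..b, (b - s) ^ (α - 1) * (2 * u m))
        ≤ ∫ s in a..b, ((b - s) ^ (α - 1) * u s + (b - s) ^ (α - 1) * u (a + b - s)) := by
      apply intervalIntegral.integral_mono_on hab' (hw1.mul_const _) (hI1.add hI3)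
      intro x hx
      have h1 := hmid x hx
      have h2 := hwnn x hx
      nlinarith
    rw [intervalIntegral.integral_mul_const, hc] at hmono
    rw [intervalIntegral.integral_add hI1 hI3, hrefl] at hmono
    exact hmono
  -- upper inequality on integrals
  have hup : I1 + I2 ≤ (b - a) ^ α / α * (u a + u b) := by
    have hmono : (∫ s in a..b, ((b - s) ^ (α - 1) * u s + (b - s) ^ (α - 1) * u (a + b - s)))
        ≤ ∫ s in a..b, (b - s) ^ (α - 1) * (u a + u b) := by
      apply intervalIntegral.integral_mono_on hab' (hI1.add hI3) (hw1.mul_const _)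
      intro x hx
      have h1 := hchord x hx
      have h2 := hwnn x hx
      nlinarith
    rw [intervalIntegral.integral_mul_const, hc] at hmono
    rw [intervalIntegral.integral_add hI1 hI3, hrefl] at hmono
    exact hmono
  -- rewrite the middle expression
  have hΓ : Real.Gamma α ≠ 0 := (Real.Gamma_pos_of_pos hα).ne'
  have hp : (0:ℝ) < (b - a) ^ α := Real.rpow_pos_of_pos hba α
  have hE : (Real.Gamma (α + 1) / (2 * (b - a) ^ α)) *
      ((1 / Real.Gamma α) * I1 + (1 / Real.Gamma α) * I2)
      = α / (2 * (b - a) ^ α) * (I1 + I2) := by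
    rw [Real.Gamma_add_one hα.ne']
    field_simp
  rw [hE]
  constructor
  · calc u m = α / (2 * (b - a) ^ α) * ((b - a) ^ α / α * (2 * u m)) := by
          field_simp
    _ ≤ α / (2 * (b - a) ^ α) * (I1 + I2) := by
          apply mul_le_mul_of_nonneg_left hlow (by positivity)
  · calc α / (2 * (b - a) ^ α) * (I1 + I2)
        ≤ α / (2 * (b - a) ^ α) * ((b - a) ^ α / α * (u a + u b)) := by
          apply mul_le_mul_of_nonneg_left hup (by positivity)
    _ = (u a + u b) / 2 := by field_simp
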